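/- arXiv:2011.12452 — 2 statements merged into one kernel-verified Lean document; each statement's English description precedes it below -/
import Mathlib

section
/- Existence of the Weierstrass form of a 1-form (Lemma 4.1, existence part): Let n > 1 be an integer and let f = Σ_{i=0}^{n} a_i(X)·Y^{n−i} ∈ ℂ⟦X⟧[Y] be of degree n in Y with a_0(0) ≠ 0. Then for every pair R, S ∈ ℂ⟦X,Y⟧ there exist h, p ∈ ℂ⟦X,Y⟧ and A, B ∈ ℂ⟦X⟧[Y], with A = 0 or deg_Y A < n, and B = 0 or deg_Y B < n − 1, such that R = h·f_X + p·f + A and S = h·f_Y + B (equivalently, the 1-form W = R dX + S dY can be written as W = h df + p f dX + A dX + B dY). -/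
noncomputable section

/-- `ℂ⟦X,Y⟧`: formal power series in two variables over `ℂ`. -/
abbrev PS2 : Type := MvPowerSeries (Fin 2) ℂ

/-- Embedding of `ℂ⟦X⟧[Y]` into `ℂ⟦X,Y⟧`:
`P = Σ_j a_j(X) Y^j ↦ Σ_{i,j} (coeff of X^i in a_j) X^i Y^j`. -/
def toMv (P : Polynomial (PowerSeries ℂ)) : PS2 :=
  fun m => PowerSeries.coeff (m 0) (P.coeff (m 1))

/-- Partial derivative of a power series in `ℂ⟦X,Y⟧` with respect to variable `i`
(`pd 0` is `∂/∂X`, `pd 1` is `∂/∂Y`). -/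
def pd (i : Fin 2) (f : PS2) : PS2 :=
  fun m => ((m i + 1 : ℕ) : ℂ) * MvPowerSeries.coeff (m + Finsupp.single i 1) f

/-- `ord f`: the least total degree of a monomial occurring in `f`. -/
def tord (f : PS2) : ℕ :=
  sInf {d | ∃ m : Fin 2 →₀ ℕ, m 0 + m 1 = d ∧ MvPowerSeries.coeff m f ≠ 0}

/-- Intersection number `i₀(f,g) = dim_ℂ ℂ⟦X,Y⟧/(f,g)`. -/
def i0 (f g : PS2) : ℕ :=
  Module.finrank ℂ (PS2 ⧸ Ideal.span ({f, g} : Set PS2))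

lemma finsupp_fin2 (m : Fin 2 →₀ ℕ) :
    m = Finsupp.single 0 (m 0) + Finsupp.single 1 (m 1) := by
  ext j
  fin_cases j <;> simp [Finsupp.single_apply]

lemma sc_app0 (a c : ℕ) :
    (Finsupp.single (0 : Fin 2) a + Finsupp.single (1 : Fin 2) c : Fin 2 →₀ ℕ) 0 = a := by
  simp [Finsupp.single_apply]

lemma sc_app1 (a c : ℕ) :
    (Finsupp.single (0 : Fin 2) a + Finsupp.single (1 : Fin 2) c : Fin 2 →₀ ℕ) 1 = c := by
  simp [Finsupp.single_apply]

lemma coeff_mul_2 (F G : PS2) (m : Fin 2 →₀ ℕ) :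
    MvPowerSeries.coeff m (F * G) =
      ∑ p ∈ Finset.HasAntidiagonal.antidiagonal (m 0), ∑ s ∈ Finset.HasAntidiagonal.antidiagonal (m 1),
        MvPowerSeries.coeff (Finsupp.single 0 p.1 + Finsupp.single 1 s.1) F *
        MvPowerSeries.coeff (Finsupp.single 0 p.2 + Finsupp.single 1 s.2) G := by
  rw [MvPowerSeries.coeff_mul, ← Finset.sum_product']
  refine Finset.sum_nbij' (fun pq => ((pq.1 0, pq.2 0), (pq.1 1, pq.2 1)))
    (fun x => (Finsupp.single 0 x.1.1 + Finsupp.single 1 x.2.1,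
               Finsupp.single 0 x.1.2 + Finsupp.single 1 x.2.2)) ?_ ?_ ?_ ?_ ?_
  · rintro ⟨p, q⟩ hpq
    rw [Finset.HasAntidiagonal.mem_antidiagonal] at hpq
    simp only [Finset.mem_product, Finset.HasAntidiagonal.mem_antidiagonal]
    constructor
    · exact congrFun (congrArg (fun f : Fin 2 →₀ ℕ => ⇑f) hpq) 0
    · exact congrFun (congrArg (fun f : Fin 2 →₀ ℕ => ⇑f) hpq) 1
  · rintro ⟨⟨a, b⟩, ⟨c, e⟩⟩ hx
    simp only [Finset.mem_product, Finset.HasAntidiagonal.mem_antidiagonal] at hx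
    rw [Finset.HasAntidiagonal.mem_antidiagonal]
    have : (Finsupp.single (0:Fin 2) a + Finsupp.single 1 c) +
        (Finsupp.single (0:Fin 2) b + Finsupp.single 1 e)
        = Finsupp.single 0 (a + b) + Finsupp.single 1 (c + e) := by
      simp [Finsupp.single_add]; abel
    rw [this, hx.1, hx.2]
    exact (finsupp_fin2 m).symm
  · rintro ⟨p, q⟩ _
    simp only [Prod.mk.injEq]
    exact ⟨(finsupp_fin2 p).symm, (finsupp_fin2 q).symm⟩
  · rintro ⟨⟨a, b⟩, ⟨c, e⟩⟩ _
    simp [sc_app0, sc_app1]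
  · rintro ⟨p, q⟩ _
    rw [← finsupp_fin2, ← finsupp_fin2]
noncomputable section
open PowerSeries

/-- One division step in `ℂ⟦Y⟧`. -/
lemma div_step (gbar : PowerSeries ℂ) (e : ℕ)
    (he0 : ∀ k < e, PowerSeries.coeff k gbar = 0)
    (he1 : PowerSeries.coeff e gbar ≠ 0) :
    ∀ U : PowerSeries ℂ, ∃ qr : PowerSeries ℂ × Polynomial ℂ,
      (qr.2).degree < (e : ℕ) ∧ U = qr.1 * gbar + (qr.2 : PowerSeries ℂ) := by
  obtain ⟨v, hv⟩ : (PowerSeries.X : PowerSeries ℂ) ^ e ∣ gbar :=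
    PowerSeries.X_pow_dvd_iff.2 he0
  have hv0 : PowerSeries.constantCoeff v ≠ 0 := by
    intro h0
    apply he1
    rw [hv]
    have := PowerSeries.coeff_X_pow_mul v e 0
    simpa [h0] using this
  set u : ℂˣ := Units.mk0 _ hv0 with hu
  have hvu : PowerSeries.constantCoeff v = ↑u := rfl
  intro U
  set r : Polynomial ℂ := PowerSeries.trunc e U with hr
  have hdvd : (PowerSeries.X : PowerSeries ℂ) ^ e ∣ (U - (r : PowerSeries ℂ)) := by
    rw [PowerSeries.X_pow_dvd_iff]
    intro k hk
    rw [map_sub, Polynomial.coeff_coe, PowerSeries.coeff_trunc, if_pos hk, sub_self]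
  obtain ⟨w, hw⟩ := hdvd
  refine ⟨(w * PowerSeries.invOfUnit v u, r), ?_, ?_⟩
  · exact PowerSeries.degree_trunc_lt U e
  · have hinv : v * PowerSeries.invOfUnit v u = 1 := PowerSeries.mul_invOfUnit v u hvu
    have : w * PowerSeries.invOfUnit v u * gbar = U - (r : PowerSeries ℂ) := by
      rw [hv]
      calc w * PowerSeries.invOfUnit v u * (PowerSeries.X ^ e * v)
          = (PowerSeries.X ^ e * w) * (v * PowerSeries.invOfUnit v u) := by ring
        _ = U - (r : PowerSeries ℂ) := by rw [hinv, mul_one, ← hw]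
    rw [this]; ring

/-- Recursive construction of the quotient/remainder coefficients. -/
def seqQR (divq : PowerSeries ℂ → PowerSeries ℂ × Polynomial ℂ)
    (T G : ℕ → PowerSeries ℂ) : ℕ → PowerSeries ℂ × Polynomial ℂ
  | m => divq (T m - ∑ a : Fin m, (seqQR divq T G a).1 * G (m - a))
  decreasing_by exact a.isLt

lemma seqQR_eq (divq : PowerSeries ℂ → PowerSeries ℂ × Polynomial ℂ)
    (T G : ℕ → PowerSeries ℂ) (m : ℕ) :
    seqQR divq T G m
      = divq (T m - ∑ a ∈ Finset.range m, (seqQR divq T G a).1 * G (m - a)) := by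
  rw [seqQR]
  congr 1
  rw [Finset.sum_range]

lemma coeff_toMv (P : Polynomial (PowerSeries ℂ)) (m : Fin 2 →₀ ℕ) :
    MvPowerSeries.coeff m (toMv P) = PowerSeries.coeff (m 0) (P.coeff (m 1)) := rfl

/-- Division with remainder in `ℂ⟦X,Y⟧` by a polynomial in `Y` whose leading
coefficient is a unit of `ℂ⟦X⟧`. -/
lemma div_lemma (g : Polynomial (PowerSeries ℂ))
    (hg : PowerSeries.constantCoeff g.leadingCoeff ≠ 0) (T : PS2) :
    ∃ (q : PS2) (r : Polynomial (PowerSeries ℂ)),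
      (r = 0 ∨ r.natDegree < g.natDegree) ∧ T = q * toMv g + toMv r := by
  classical
  set d := g.natDegree with hd
  set Gf : ℕ → PowerSeries ℂ :=
    fun b => PowerSeries.mk fun k => PowerSeries.coeff b (g.coeff k) with hGf
  have hGf0 : ∀ k, PowerSeries.coeff k (Gf 0)
      = PowerSeries.constantCoeff (g.coeff k) := by
    intro k
    simp [hGf, PowerSeries.coeff_mk, PowerSeries.coeff_zero_eq_constantCoeff]
  have hex : ∃ k, PowerSeries.coeff k (Gf 0) ≠ 0 := by
    refine ⟨d, ?_⟩
    rw [hGf0]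
    exact hg
  set e := Nat.find hex with he
  have he1 : PowerSeries.coeff e (Gf 0) ≠ 0 := Nat.find_spec hex
  have he0 : ∀ k < e, PowerSeries.coeff k (Gf 0) = 0 := by
    intro k hk
    by_contra hne
    exact absurd (Nat.find_min' hex hne) (not_le.2 hk)
  have he_le : e ≤ d := by
    apply Nat.find_min' hex
    rw [hGf0]; exact hg
  choose divq hdivq using div_step (Gf 0) e he0 he1
  set Tm : ℕ → PowerSeries ℂ := fun i => PowerSeries.mk fun k =>
    MvPowerSeries.coeff (Finsupp.single 0 i + Finsupp.single 1 k) T with hTm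
  set Q : ℕ → PowerSeries ℂ := fun m => (seqQR divq Tm Gf m).1 with hQ
  set Rm : ℕ → Polynomial ℂ := fun m => (seqQR divq Tm Gf m).2 with hRm
  have hstep : ∀ m : ℕ, (Rm m).degree < (e : ℕ) ∧
      Tm m = (∑ a ∈ Finset.range (m + 1), Q a * Gf (m - a)) + ((Rm m : Polynomial ℂ) :
        PowerSeries ℂ) := by
    intro m
    have heq := seqQR_eq divq Tm Gf m
    have h := hdivq (Tm m - ∑ a ∈ Finset.range m, Q a * Gf (m - a))
    have hQm : Q m = (divq (Tm m - ∑ a ∈ Finset.range m, Q a * Gf (m - a))).1 := by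
      show (seqQR divq Tm Gf m).1 = _; rw [heq]
    have hRmm : Rm m = (divq (Tm m - ∑ a ∈ Finset.range m, Q a * Gf (m - a))).2 := by
      show (seqQR divq Tm Gf m).2 = _; rw [heq]
    constructor
    · rw [hRmm]; exact h.1
    · rw [Finset.sum_range_succ, Nat.sub_self]
      have h2 := h.2
      rw [← hQm, ← hRmm] at h2
      linear_combination h2
  -- the remainder polynomial
  set B : Polynomial (PowerSeries ℂ) := ∑ k ∈ Finset.range e,
    Polynomial.C (PowerSeries.mk fun i => (Rm i).coeff k) * Polynomial.X ^ k with hB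
  have hBcoeff : ∀ k, B.coeff k =
      if k < e then PowerSeries.mk (fun i => (Rm i).coeff k) else 0 := by
    intro k
    rw [hB, Polynomial.finset_sum_coeff]
    simp only [Polynomial.coeff_C_mul, Polynomial.coeff_X_pow, mul_ite, mul_one, mul_zero]
    rw [Finset.sum_ite_eq (Finset.range e) k (fun k' => PowerSeries.mk fun i => (Rm i).coeff k')]
    simp [Finset.mem_range]
  -- the quotient
  set q : PS2 := (fun mm => PowerSeries.coeff (mm 1) (Q (mm 0)) : MvPowerSeries (Fin 2) ℂ)
    with hq
  have hq_coeff : ∀ a c : ℕ,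
      MvPowerSeries.coeff (Finsupp.single 0 a + Finsupp.single 1 c) q
        = PowerSeries.coeff c (Q a) := by
    intro a c
    rw [MvPowerSeries.coeff_apply, hq]
    show PowerSeries.coeff
      ((Finsupp.single (0:Fin 2) a + Finsupp.single 1 c : Fin 2 →₀ ℕ) 1)
      (Q ((Finsupp.single (0:Fin 2) a + Finsupp.single 1 c : Fin 2 →₀ ℕ) 0)) = _
    rw [sc_app0, sc_app1]
  have hg_coeff : ∀ b c : ℕ,
      MvPowerSeries.coeff (Finsupp.single 0 b + Finsupp.single 1 c) (toMv g)
        = PowerSeries.coeff c (Gf b) := by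
    intro b c
    rw [coeff_toMv, sc_app0, sc_app1, hGf, PowerSeries.coeff_mk]
  refine ⟨q, B, ?_, ?_⟩
  · rcases Nat.eq_zero_or_pos e with he0' | hepos
    · left; rw [hB, he0']; simp
    · right
      have : B.natDegree ≤ e - 1 := by
        rw [hB]
        apply Polynomial.natDegree_sum_le_of_forall_le
        intro k hk
        refine le_trans (Polynomial.natDegree_C_mul_X_pow_le _ _) ?_
        rw [Finset.mem_range] at hk
        omega
      omega
  · apply MvPowerSeries.ext
    intro m
    rw [map_add, coeff_mul_2]
    have h2 : (∑ p ∈ Finset.HasAntidiagonal.antidiagonal (m 0), ∑ s ∈ Finset.HasAntidiagonal.antidiagonal (m 1),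
        MvPowerSeries.coeff (Finsupp.single 0 p.1 + Finsupp.single 1 s.1) q *
        MvPowerSeries.coeff (Finsupp.single 0 p.2 + Finsupp.single 1 s.2) (toMv g))
        = PowerSeries.coeff (m 1)
            (∑ a ∈ Finset.range (m 0 + 1), Q a * Gf (m 0 - a)) := by
      have h1 : ∀ p : ℕ × ℕ, p ∈ Finset.HasAntidiagonal.antidiagonal (m 0) →
          (∑ s ∈ Finset.HasAntidiagonal.antidiagonal (m 1),
            MvPowerSeries.coeff (Finsupp.single 0 p.1 + Finsupp.single 1 s.1) q *
            MvPowerSeries.coeff (Finsupp.single 0 p.2 + Finsupp.single 1 s.2) (toMv g))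
            = PowerSeries.coeff (m 1) (Q p.1 * Gf p.2) := by
        intro p _
        rw [PowerSeries.coeff_mul]
        refine Finset.sum_congr rfl fun s _ => ?_
        rw [hq_coeff, hg_coeff]
      rw [Finset.sum_congr rfl h1, ← map_sum,
        Finset.Nat.sum_antidiagonal_eq_sum_range_succ_mk]
    have hT : MvPowerSeries.coeff m T = PowerSeries.coeff (m 1) (Tm (m 0)) := by
      show _ = PowerSeries.coeff (m 1) (PowerSeries.mk fun k =>
        MvPowerSeries.coeff (Finsupp.single 0 (m 0) + Finsupp.single 1 k) T)
      rw [PowerSeries.coeff_mk, ← finsupp_fin2]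
    rw [h2, hT, (hstep (m 0)).2, map_add, Polynomial.coeff_coe]
    congr 1
    rw [coeff_toMv, hBcoeff]
    by_cases hke : m 1 < e
    · rw [if_pos hke, PowerSeries.coeff_mk]
    · rw [if_neg hke]
      have hz : (Rm (m 0)).coeff (m 1) = 0 := by
        refine Polynomial.coeff_eq_zero_of_degree_lt
          (lt_of_lt_of_le (hstep (m 0)).1 ?_)
        exact_mod_cast not_lt.1 hke
      rw [hz]
      simp

lemma pd1_toMv (P : Polynomial (PowerSeries ℂ)) :
    pd 1 (toMv P) = toMv (Polynomial.derivative P) := by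
  apply MvPowerSeries.ext
  intro m
  have lhs : MvPowerSeries.coeff m (pd 1 (toMv P))
      = ((m 1 + 1 : ℕ) : ℂ) * MvPowerSeries.coeff (m + Finsupp.single 1 1) (toMv P) := rfl
  rw [lhs, coeff_toMv, coeff_toMv]
  have h0 : (m + Finsupp.single 1 1 : Fin 2 →₀ ℕ) 0 = m 0 := by
    simp [Finsupp.single_apply]
  have h1 : (m + Finsupp.single 1 1 : Fin 2 →₀ ℕ) 1 = m 1 + 1 := by
    simp
  rw [h0, h1, Polynomial.coeff_derivative]
  have hC : ((m 1 : PowerSeries ℂ) + 1) = PowerSeries.C ((m 1 : ℂ) + 1) := by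
    rw [map_add (PowerSeries.C), map_natCast (PowerSeries.C), map_one (PowerSeries.C)]
  rw [hC, PowerSeries.coeff_mul_C]
  push_cast
  ring

/-- Existence of the Weierstrass form of a 1-form (Lemma 4.1, existence part). -/
theorem weierstrass_form_existence
    (n : ℕ) (hn : 1 < n) (f : Polynomial (PowerSeries ℂ))
    (hdeg : f.natDegree = n)
    (ha0 : PowerSeries.constantCoeff f.leadingCoeff ≠ 0)
    (R S : PS2) :
    ∃ (h p : PS2) (A B : Polynomial (PowerSeries ℂ)),
      (A = 0 ∨ A.natDegree < n) ∧ (B = 0 ∨ B.natDegree < n - 1) ∧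
      R = h * pd 0 (toMv f) + p * toMv f + toMv A ∧
      S = h * pd 1 (toMv f) + toMv B := by
  classical
  set f' := Polynomial.derivative f with hf'
  have hc : f'.coeff (n - 1) = f.coeff n * ((n - 1 : ℕ) + 1 : PowerSeries ℂ) := by
    rw [hf', Polynomial.coeff_derivative]
    have hn1 : n - 1 + 1 = n := by omega
    rw [hn1]
  have hcc : PowerSeries.constantCoeff (f'.coeff (n - 1)) ≠ 0 := by
    rw [hc, map_mul]
    apply mul_ne_zero
    · have : f.coeff n = f.leadingCoeff := by
        rw [Polynomial.leadingCoeff, hdeg]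
      rw [this]; exact ha0
    · have : PowerSeries.constantCoeff ((n - 1 : ℕ) + 1 : PowerSeries ℂ)
          = ((n - 1 : ℕ) : ℂ) + 1 := by
        rw [map_add, map_natCast, map_one]
      rw [this]
      exact Nat.cast_add_one_ne_zero (n - 1)
  have hd' : f'.natDegree = n - 1 := by
    refine le_antisymm ?_ ?_
    · refine le_trans (Polynomial.natDegree_derivative_le f) ?_
      rw [hdeg]
    · refine Polynomial.le_natDegree_of_ne_zero ?_
      intro h0
      exact hcc (by rw [h0, map_zero])
  have hlc' : PowerSeries.constantCoeff f'.leadingCoeff ≠ 0 := by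
    rw [Polynomial.leadingCoeff, hd']; exact hcc
  obtain ⟨h, B, hBdeg, hSB⟩ := div_lemma f' hlc' S
  obtain ⟨p, A, hAdeg, hRA⟩ := div_lemma f ha0 (R - h * pd 0 (toMv f))
  refine ⟨h, p, A, B, ?_, ?_, ?_, ?_⟩
  · rw [hdeg] at hAdeg; exact hAdeg
  · rw [hd'] at hBdeg; exact hBdeg
  · linear_combination hRA
  · rw [pd1_toMv]; exact hSB
end
end
end

section
/- Multiplicity bound for 1-forms in Weierstrass form (inequality (7) in the proof of Proposition 4.3): Let n ≥ 2 and let f = Σ_{i=0}^{n} a_i(X)·Y^{n−i} ∈ ℂ⟦X⟧[Y] with a_0(0) ≠ 0 and ord(f) = deg_Y(f) = n. If h ∈ ℂ⟦X,Y⟧ is a unit (h(0,0) ≠ 0) and B ∈ ℂ⟦X⟧[Y] satisfies B = 0 or deg_Y B < n − 1, then ord(h·f_Y + B) ≤ n − 1. In particular, for any p ∈ ℂ⟦X,Y⟧ and A ∈ ℂ⟦X⟧[Y] with A = 0 or deg_Y A < n, the 1-form W = h df + p f dX + A dX + B dY has multiplicity mult(W) = min(ord(h·f_X + p·f + A), ord(h·f_Y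 + B)) ≤ n − 1. -/
noncomputable section

/-- Multiplicity bound for 1-forms in Weierstrass form (inequality (7) in the proof of
Proposition 4.3): `ord(h·f_Y + B) ≤ n - 1`, and in particular the multiplicity of
`W = h df + p f dX + A dX + B dY` is at most `n - 1`. -/
theorem mult_weierstrass_form_le
    (n : ℕ) (hn : 2 ≤ n) (f : Polynomial (PowerSeries ℂ))
    (hdeg : f.natDegree = n)
    (ha0 : PowerSeries.constantCoeff f.leadingCoeff ≠ 0)
    (hord : tord (toMv f) = n)
    (h : PS2) (hu : MvPowerSeries.constantCoeff h ≠ 0)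
    (B : Polynomial (PowerSeries ℂ)) (hB : B = 0 ∨ B.natDegree < n - 1) :
    tord (h * pd 1 (toMv f) + toMv B) ≤ n - 1 ∧
    ∀ (p : PS2) (A : Polynomial (PowerSeries ℂ)), (A = 0 ∨ A.natDegree < n) →
      min (tord (h * pd 0 (toMv f) + p * toMv f + toMv A))
          (tord (h * pd 1 (toMv f) + toMv B)) ≤ n - 1 := by
  have hcoef0 : ∀ m : Fin 2 →₀ ℕ, m 0 + m 1 < n →
      MvPowerSeries.coeff m (toMv f) = 0 := by
    intro m hm
    by_contra hc
    have : tord (toMv f) ≤ m 0 + m 1 := Nat.sInf_le ⟨m, rfl, hc⟩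
    omega
  set m₀ : Fin 2 →₀ ℕ := Finsupp.single 1 (n - 1) with hm₀
  have hm00 : m₀ 0 = 0 := Finsupp.single_eq_of_ne (by decide)
  have hm01 : m₀ 1 = n - 1 := Finsupp.single_eq_same
  have hkey : MvPowerSeries.coeff m₀ (h * pd 1 (toMv f) + toMv B) ≠ 0 := by
    rw [map_add, MvPowerSeries.coeff_mul]
    have hBz : MvPowerSeries.coeff m₀ (toMv B) = 0 := by
      show PowerSeries.coeff (m₀ 0) (B.coeff (m₀ 1)) = 0
      rcases hB with hB | hB
      · simp [hB]
      · rw [hm01, Polynomial.coeff_eq_zero_of_natDegree_lt hB]; simp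
    rw [hBz, add_zero]
    rw [Finset.sum_eq_single ((0 : Fin 2 →₀ ℕ), m₀)]
    · have hpd : MvPowerSeries.coeff m₀ (pd 1 (toMv f)) =
          (n : ℂ) * MvPowerSeries.coeff (Finsupp.single 1 n) (toMv f) := by
        show ((m₀ 1 + 1 : ℕ) : ℂ) *
            MvPowerSeries.coeff (m₀ + Finsupp.single 1 1) (toMv f) = _
        have h1 : m₀ 1 + 1 = n := by omega
        have h2 : m₀ + Finsupp.single 1 1 = Finsupp.single 1 n := by
          rw [hm₀, ← Finsupp.single_add]; congr 1; omega
        rw [h1, h2]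
      rw [hpd]
      have hfl : MvPowerSeries.coeff (Finsupp.single 1 n) (toMv f) =
          PowerSeries.constantCoeff f.leadingCoeff := by
        show PowerSeries.coeff ((Finsupp.single (1 : Fin 2) n) 0)
            (f.coeff ((Finsupp.single (1 : Fin 2) n) 1)) = _
        rw [show (Finsupp.single (1 : Fin 2) n) 0 = 0 from
            Finsupp.single_eq_of_ne (by decide),
          show (Finsupp.single (1 : Fin 2) n) 1 = n from Finsupp.single_eq_same,
          ← hdeg, Polynomial.coeff_natDegree, PowerSeries.coeff_zero_eq_constantCoeff]
      rw [hfl]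
      have hC : MvPowerSeries.coeff 0 h = MvPowerSeries.constantCoeff h := rfl
      rw [hC]
      have hn0 : (n : ℂ) ≠ 0 := Nat.cast_ne_zero.mpr (by omega)
      exact mul_ne_zero hu (mul_ne_zero hn0 ha0)
    · intro b hb hne
      rw [Finset.HasAntidiagonal.mem_antidiagonal] at hb
      have h0 : b.1 0 + b.2 0 = m₀ 0 := by
        have := congrArg (fun g => g 0) hb; simpa using this
      have h1 : b.1 1 + b.2 1 = m₀ 1 := by
        have := congrArg (fun g => g 1) hb; simpa using this
      have hb1 : 1 ≤ b.1 0 + b.1 1 := by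
        by_contra hc
        push_neg at hc
        apply hne
        have hb10 : b.1 = 0 := by
          ext i
          fin_cases i <;> simp <;> omega
        have : b.2 = m₀ := by rw [← hb, hb10, zero_add]
        exact Prod.ext hb10 this
      have hdeg2 : ((b.2 + Finsupp.single 1 1 : Fin 2 →₀ ℕ)) 0 +
          ((b.2 + Finsupp.single 1 1 : Fin 2 →₀ ℕ)) 1 < n := by
        simp only [Finsupp.add_apply, Finsupp.single_eq_same,
          show (Finsupp.single (1 : Fin 2) 1) 0 = 0 from Finsupp.single_eq_of_ne (by decide)]
        omega
      show MvPowerSeries.coeff b.1 h * MvPowerSeries.coeff b.2 (pd 1 (toMv f)) = 0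
      have : MvPowerSeries.coeff b.2 (pd 1 (toMv f)) = 0 := by
        show ((b.2 1 + 1 : ℕ) : ℂ) *
            MvPowerSeries.coeff (b.2 + Finsupp.single 1 1) (toMv f) = 0
        rw [hcoef0 _ hdeg2, mul_zero]
      rw [this, mul_zero]
    · intro habs
      exact absurd (Finset.HasAntidiagonal.mem_antidiagonal.mpr (by simp)) habs
  have hmain : tord (h * pd 1 (toMv f) + toMv B) ≤ n - 1 := by
    apply Nat.sInf_le
    exact ⟨m₀, by omega, hkey⟩
  exact ⟨hmain, fun p A _ => le_trans (min_le_right _ _) hmain⟩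
end
end
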